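/- arXiv:2303.10953 — 3 statements merged into one kernel-verified Lean document; each statement's English description precedes it below -/
import Mathlib

section
/- Let p be a real number with 0 ≤ p ≤ 1/2. Then the function sending a natural number l to Σ_{j odd, 0 ≤ j ≤ l} C(l, j) p^j (1−p)^{l−j} is monotone nondecreasing in l; that is, for all natural numbers l ≤ l', Σ_{j odd ≤ l} C(l, j) p^j (1−p)^{l−j} ≤ Σ_{j odd ≤ l'} C(l', j) p^j (1−p)^{l'−j}. -/
open Finset

lemma odd_sum_closed (p : ℝ) (l : ℕ) :
    (∑ j ∈ Finset.range (l + 1),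
      if Odd j then (l.choose j : ℝ) * p ^ j * (1 - p) ^ (l - j) else 0)
    = (1 - (1 - 2 * p) ^ l) / 2 := by
  have h1 : (∑ j ∈ Finset.range (l + 1),
      p ^ j * (1 - p) ^ (l - j) * (l.choose j : ℝ)) = 1 := by
    have := add_pow p (1 - p) l
    simp at this
    exact this.symm
  have h2 : (1 - 2 * p) ^ l = ∑ j ∈ Finset.range (l + 1),
      (-p) ^ j * (1 - p) ^ (l - j) * (l.choose j : ℝ) := by
    have := add_pow (-p) (1 - p) l
    have e : -p + (1 - p) = 1 - 2 * p := by ring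
    rw [e] at this
    exact this
  have key : (∑ j ∈ Finset.range (l + 1),
      if Odd j then (l.choose j : ℝ) * p ^ j * (1 - p) ^ (l - j) else 0)
    = ((∑ j ∈ Finset.range (l + 1), p ^ j * (1 - p) ^ (l - j) * (l.choose j : ℝ))
       - ∑ j ∈ Finset.range (l + 1), (-p) ^ j * (1 - p) ^ (l - j) * (l.choose j : ℝ)) / 2 := by
    rw [← Finset.sum_sub_distrib, Finset.sum_div]
    apply Finset.sum_congr rfl
    intro j _
    rcases Nat.even_or_odd j with he | ho
    · rw [if_neg (by simpa using he), he.neg_pow]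
      ring
    · rw [if_pos ho, ho.neg_pow]
      ring
  rw [key, h1, h2]

/-- For `0 ≤ p ≤ 1/2`, the per-coordinate odd-flip probability
`∑_{j odd ≤ l} C(l,j) p^j (1-p)^(l-j)` is monotone nondecreasing in `l`. -/
theorem odd_binomial_sum_monotone (p : ℝ) (hp0 : 0 ≤ p) (hp : p ≤ 1 / 2) :
    Monotone (fun l : ℕ =>
      ∑ j ∈ Finset.range (l + 1),
        if Odd j then (l.choose j : ℝ) * p ^ j * (1 - p) ^ (l - j) else 0) := by
  intro a b hab
  simp only [odd_sum_closed]
  have h0 : (0 : ℝ) ≤ 1 - 2 * p := by linarith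
  have h1 : 1 - 2 * p ≤ 1 := by linarith
  have := pow_le_pow_of_le_one h0 h1 hab
  linarith
end

section
/- Let n ≥ 2 and e be natural numbers, X a type, and A_1, …, A_n finite subsets of X with |A_i| ≤ e for each i. Suppose there is an injective assignment of elements x_{ij} ∈ X to the pairs 1 ≤ i < j ≤ n such that x_{ij} ∈ A_i ∩ A_j for every pair. Then |A_1 ∪ ⋯ ∪ A_n| ≤ n·e − n(n−1)/2. -/
open Finset

lemma pair_count (n : ℕ) :
    2 * (univ.filter fun p : Fin n × Fin n => p.1 < p.2).card = n * (n - 1) := by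
  have himg : (univ.filter fun p : Fin n × Fin n => p.1 < p.2)
      = (univ.filter fun p : Fin n × Fin n => p.2 < p.1).image Prod.swap := by
    ext ⟨a, b⟩
    constructor
    · intro h
      simp only [mem_filter, mem_univ, true_and] at h
      exact Finset.mem_image.2 ⟨(b, a), by simpa using h, rfl⟩
    · intro h
      obtain ⟨⟨c, d⟩, hcd, heq⟩ := Finset.mem_image.1 h
      simp only [Prod.swap] at heq
      cases heq
      simpa using hcd
  have hcard : (univ.filter fun p : Fin n × Fin n => p.1 < p.2).card
      = (univ.filter fun p : Fin n × Fin n => p.2 < p.1).card := by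
    rw [himg, Finset.card_image_of_injective _ Prod.swap_injective]
  have hdisj : Disjoint (univ.filter fun p : Fin n × Fin n => p.1 < p.2)
      (univ.filter fun p : Fin n × Fin n => p.2 < p.1) := by
    rw [Finset.disjoint_left]
    rintro ⟨a, b⟩ h1 h2
    simp only [mem_filter] at h1 h2
    exact absurd h2.2 (not_lt_of_gt h1.2)
  have hunion : (univ.filter fun p : Fin n × Fin n => p.1 < p.2) ∪
      (univ.filter fun p : Fin n × Fin n => p.2 < p.1)
      = (univ : Finset (Fin n)).offDiag := by
    ext ⟨a, b⟩
    simp only [Finset.mem_union, mem_filter, mem_univ, true_and, Finset.mem_offDiag]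
    constructor
    · rintro (h | h)
      · exact h.ne
      · exact h.ne'
    · exact fun h => lt_or_gt_of_ne h
  have h := Finset.card_union_of_disjoint hdisj
  rw [hunion, Finset.offDiag_card, Finset.card_univ, Fintype.card_fin] at h
  have h2 : n * (n - 1) = n * n - n := by cases n <;> simp [Nat.mul_sub_one, Nat.succ_mul, Nat.mul_succ]
  omega

/-- If `n ≥ 2` finite sets `A i` each have at most `e` elements, and there is
an injective choice of witnesses `x p ∈ A p.1 ∩ A p.2` for every pair
`p.1 < p.2`, then the union has at most `n * e - n * (n-1) / 2` elements. -/
theorem perfect_csn_upper_bound (n e : ℕ) (hn : 2 ≤ n) {X : Type*}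
    [DecidableEq X] (A : Fin n → Finset X) (hA : ∀ i, (A i).card ≤ e)
    (x : {p : Fin n × Fin n // p.1 < p.2} → X)
    (hinj : Function.Injective x)
    (hx : ∀ p : {p : Fin n × Fin n // p.1 < p.2}, x p ∈ A p.1.1 ∩ A p.1.2) :
    (Finset.univ.biUnion A).card ≤ n * e - n * (n - 1) / 2 := by
  classical
  set U : Finset X := Finset.univ.biUnion A with hU
  set W : Finset X := Finset.univ.image x with hW
  set m : X → ℕ := fun y => (univ.filter fun i => y ∈ A i).card with hm
  -- W has exactly the number of pairs elements
  have hWcard : 2 * W.card = n * (n - 1) := by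
    rw [hW, Finset.card_image_of_injective _ hinj, Finset.card_univ,
      Fintype.card_subtype, ← pair_count n]
  -- W ⊆ U
  have hWU : W ⊆ U := by
    intro y hy
    obtain ⟨p, -, rfl⟩ := Finset.mem_image.1 hy
    exact Finset.mem_biUnion.2 ⟨p.1.1, mem_univ _, (Finset.mem_inter.1 (hx p)).1⟩
  -- double counting
  have hsum : ∑ i, (A i).card = ∑ y ∈ U, m y := by
    calc ∑ i, (A i).card = ∑ i, ∑ y ∈ U, if y ∈ A i then 1 else 0 := by
          refine Finset.sum_congr rfl fun i _ => ?_
          rw [← Finset.card_filter]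
          congr 1
          rw [Finset.filter_mem_eq_inter, Finset.inter_eq_right.2]
          intro y hy
          exact Finset.mem_biUnion.2 ⟨i, mem_univ _, hy⟩
      _ = ∑ y ∈ U, ∑ i, if y ∈ A i then 1 else 0 := Finset.sum_comm
      _ = ∑ y ∈ U, m y := by
          refine Finset.sum_congr rfl fun y _ => ?_
          simp only [hm, Finset.card_filter]
  have hm1 : ∀ y ∈ U, 1 ≤ m y := by
    intro y hy
    obtain ⟨i, -, hi⟩ := Finset.mem_biUnion.1 hy
    exact Finset.card_pos.2 ⟨i, Finset.mem_filter.2 ⟨mem_univ _, hi⟩⟩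
  have hm2 : ∀ y ∈ W, 2 ≤ m y := by
    intro y hy
    obtain ⟨p, -, rfl⟩ := Finset.mem_image.1 hy
    have h1 := (Finset.mem_inter.1 (hx p)).1
    have h2 := (Finset.mem_inter.1 (hx p)).2
    have hsub : ({p.1.1, p.1.2} : Finset (Fin n)) ⊆
        univ.filter fun i => x p ∈ A i := by
      intro i hi
      rcases Finset.mem_insert.1 hi with rfl | hi
      · exact Finset.mem_filter.2 ⟨mem_univ _, h1⟩
      · rw [Finset.mem_singleton.1 hi]
        exact Finset.mem_filter.2 ⟨mem_univ _, h2⟩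
    have : ({p.1.1, p.1.2} : Finset (Fin n)).card = 2 :=
      Finset.card_pair p.2.ne
    calc 2 = ({p.1.1, p.1.2} : Finset (Fin n)).card := this.symm
      _ ≤ m (x p) := Finset.card_le_card hsub
  -- lower bound the sum
  have hlow : U.card + W.card ≤ ∑ y ∈ U, m y := by
    have hsplit : ∑ y ∈ U, m y = ∑ y ∈ U \ W, m y + ∑ y ∈ W, m y := by
      rw [Finset.sum_sdiff hWU]
    have h1 : (U \ W).card ≤ ∑ y ∈ U \ W, m y :=
      Finset.card_nsmul_le_sum _ _ 1 (fun y hy => hm1 y (Finset.mem_sdiff.1 hy).1)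
        |>.trans_eq' (by simp)
    have h2 : 2 * W.card ≤ ∑ y ∈ W, m y := by
      have := Finset.card_nsmul_le_sum W m 2 hm2
      simpa [mul_comm] using this
    have hcardsd : (U \ W).card = U.card - W.card := Finset.card_sdiff_of_subset hWU
    have hWle : W.card ≤ U.card := Finset.card_le_card hWU
    omega
  have hup : ∑ y ∈ U, m y ≤ n * e := by
    rw [← hsum]
    calc ∑ i, (A i).card ≤ ∑ _i : Fin n, e := Finset.sum_le_sum fun i _ => hA i
      _ = n * e := by simp [mul_comm]
  omega
end

section
/- Let n ≥ 2 and r be natural numbers, X a type, and A_1, …, A_n finite subsets of X. Suppose (i) there is an injective assignment of elements x_{ij} ∈ X to the pairs 1 ≤ i < j ≤ n with x_{ij} ∈ A_i ∩ A_j for every pair, and (ii) for each i there is a subset W_i ⊆ A_i with |W_i| ≥ r and W_i ∩ A_j = ∅ for every j ≠ i. Then |A_1 ∪ ⋯ ∪ A_n| ≥ n·r + n(n−1)/2. -/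
open Finset

lemma pairs_card (n : ℕ) :
    Fintype.card {p : Fin n × Fin n // p.1 < p.2} = n * (n - 1) / 2 := by
  rw [Fintype.card_subtype]
  have h1 : (univ.filter fun p : Fin n × Fin n => p.1 < p.2)
      = (univ.sigma (fun i : Fin n => Ioi i)).image (fun q => (q.1, q.2)) := by
    ext p
    simp [Finset.mem_sigma, Finset.mem_image, Prod.ext_iff]
  rw [h1, Finset.card_image_of_injective _ (fun a b h => by
    cases a; cases b; simp_all [Prod.ext_iff, Sigma.ext_iff]),
    Finset.card_sigma]
  simp only [Fin.card_Ioi]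
  rw [Fin.sum_univ_eq_sum_range (fun i => n - 1 - i)]
  rw [← Finset.sum_range_reflect]
  rw [Finset.sum_congr rfl (fun j hj => by rw [Finset.mem_range] at hj; omega : ∀ j ∈ range n, n - 1 - (n - 1 - j) = j), Finset.sum_range_id]

/-- If `n ≥ 2` finite sets `A i` admit an injective choice of pairwise
intersection witnesses `x p ∈ A p.1 ∩ A p.2`, and each `A i` contains a subset
`W i` of at least `r` elements disjoint from every other `A j`, then the union
has at least `n * r + n * (n-1) / 2` elements. -/
theorem perfect_csn_lower_bound (n r : ℕ) (hn : 2 ≤ n) {X : Type*}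
    [DecidableEq X] (A : Fin n → Finset X)
    (x : {p : Fin n × Fin n // p.1 < p.2} → X)
    (hinj : Function.Injective x)
    (hx : ∀ p : {p : Fin n × Fin n // p.1 < p.2}, x p ∈ A p.1.1 ∩ A p.1.2)
    (W : Fin n → Finset X) (hWsub : ∀ i, W i ⊆ A i)
    (hWcard : ∀ i, r ≤ (W i).card)
    (hWdisj : ∀ i j, j ≠ i → W i ∩ A j = ∅) :
    n * r + n * (n - 1) / 2 ≤ (Finset.univ.biUnion A).card := by
  classical
  set S : Finset X := Finset.univ.image x with hS
  set T : Finset X := Finset.univ.biUnion W with hT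
  have hScard : S.card = n * (n - 1) / 2 := by
    rw [hS, Finset.card_image_of_injective _ hinj, Finset.card_univ, pairs_card]
  have hTcard : n * r ≤ T.card := by
    rw [hT, Finset.card_biUnion]
    · calc n * r = ∑ _i : Fin n, r := by simp [mul_comm]
        _ ≤ ∑ i, (W i).card := Finset.sum_le_sum fun i _ => hWcard i
    · intro i _ j _ hij
      rw [Function.onFun, Finset.disjoint_left]
      intro a hai haj
      have : a ∈ W i ∩ A j := Finset.mem_inter.2 ⟨hai, hWsub j haj⟩
      rw [hWdisj i j (Ne.symm hij)] at this
      exact absurd this (Finset.notMem_empty a)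
  have hdisj : Disjoint S T := by
    rw [Finset.disjoint_left]
    intro a haS haT
    obtain ⟨p, _, rfl⟩ := Finset.mem_image.1 haS
    obtain ⟨i, _, hWi⟩ := Finset.mem_biUnion.1 haT
    have hx1 := Finset.mem_inter.1 (hx p)
    have : ∃ j, j ≠ i ∧ x p ∈ A j := by
      by_cases h1 : p.1.1 = i
      · exact ⟨p.1.2, by rw [← h1]; exact (p.2.ne).symm, hx1.2⟩
      · exact ⟨p.1.1, h1, hx1.1⟩
    obtain ⟨j, hji, hj⟩ := this
    have : x p ∈ W i ∩ A j := Finset.mem_inter.2 ⟨hWi, hj⟩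
    rw [hWdisj i j hji] at this
    exact absurd this (Finset.notMem_empty _)
  have hsub : S ∪ T ⊆ Finset.univ.biUnion A := by
    intro a ha
    rcases Finset.mem_union.1 ha with h | h
    · obtain ⟨p, _, rfl⟩ := Finset.mem_image.1 h
      exact Finset.mem_biUnion.2 ⟨p.1.1, Finset.mem_univ _, (Finset.mem_inter.1 (hx p)).1⟩
    · obtain ⟨i, _, hWi⟩ := Finset.mem_biUnion.1 h
      exact Finset.mem_biUnion.2 ⟨i, Finset.mem_univ _, hWsub i hWi⟩
  calc n * r + n * (n - 1) / 2 ≤ T.card + S.card := by omega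
    _ = (S ∪ T).card := by rw [Finset.card_union_of_disjoint hdisj]; omega
    _ ≤ (Finset.univ.biUnion A).card := Finset.card_le_card hsub
end
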